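/- arXiv:1306.3684 — 3 statements merged into one kernel-verified Lean document; each statement's English description precedes it below -/
import Mathlib

section
/- Let G, Q, P be real n×n matrices, H a real n×m matrix, and R a real m×m matrix, with P, Q, R symmetric and S := R + HᵀPH invertible. Suppose P solves the discrete algebraic Riccati equation P = Q + GᵀPG − GᵀPH·S⁻¹·HᵀPG, and set K = S⁻¹HᵀPG. Let x : ℕ → ℝⁿ satisfy the closed-loop recursion x(k+1) = (G − HK)x(k), and set u(k) = −Kx(k). Then for every N, ∑_{k=0}^{N−1} [x(k)ᵀQx(k) + u(k)ᵀRu(k)] = x(0)ᵀPx(0) − x(N)ᵀPx(N); in particular, if x(N)ᵀPx(N) → 0 as N → ∞, the total infinite-horizon cost ∑_{k=0}^{∞} [x(k)ᵀQx(k) + u(k)ᵀRu(k)] equals x(0)ᵀPx(0). -/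
open Matrix Filter

lemma quad_mulVec {n m : ℕ} (A : Matrix (Fin m) (Fin n) ℝ) (B : Matrix (Fin m) (Fin m) ℝ)
    (v : Fin n → ℝ) : (A.mulVec v) ⬝ᵥ B.mulVec (A.mulVec v) = v ⬝ᵥ (Aᵀ * B * A).mulVec v := by
  rw [Matrix.dotProduct_mulVec, ← Matrix.mulVec_transpose, Matrix.mulVec_mulVec,
    Matrix.dotProduct_mulVec, ← Matrix.mulVec_transpose, Matrix.dotProduct_mulVec,
    ← Matrix.mulVec_transpose]
  simp [Matrix.transpose_mul, Matrix.mul_assoc]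

/-- The LQR feedback `u = -Kx` achieves cost exactly `x(0)ᵀ P x(0)`: along the
closed-loop trajectory `x(k+1) = (G - HK) x(k)` the partial costs telescope to
`x(0)ᵀPx(0) - x(N)ᵀPx(N)`, and if `x(N)ᵀPx(N) → 0` the infinite-horizon cost
equals `x(0)ᵀ P x(0)`. -/
theorem lqr_feedback_achieves_value
    {n m : ℕ} (G Q P : Matrix (Fin n) (Fin n) ℝ)
    (H : Matrix (Fin n) (Fin m) ℝ) (R : Matrix (Fin m) (Fin m) ℝ)
    (hP : Pᵀ = P) (hQ : Qᵀ = Q) (hR : Rᵀ = R)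
    (S : Matrix (Fin m) (Fin m) ℝ) (hS : S = R + Hᵀ * P * H)
    (hSinv : IsUnit S)
    (hRiccati : P = Q + Gᵀ * P * G - Gᵀ * P * H * S⁻¹ * (Hᵀ * P * G))
    (K : Matrix (Fin m) (Fin n) ℝ) (hK : K = S⁻¹ * (Hᵀ * P * G))
    (x : ℕ → (Fin n → ℝ))
    (hdyn : ∀ k : ℕ, x (k + 1) = (G - H * K).mulVec (x k))
    (u : ℕ → (Fin m → ℝ)) (hu : ∀ k : ℕ, u k = -(K.mulVec (x k))) :
    (∀ N : ℕ,
        ∑ k ∈ Finset.range N, (x k ⬝ᵥ Q.mulVec (x k) + u k ⬝ᵥ R.mulVec (u k)) =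
          x 0 ⬝ᵥ P.mulVec (x 0) - x N ⬝ᵥ P.mulVec (x N)) ∧
      (Tendsto (fun N : ℕ => x N ⬝ᵥ P.mulVec (x N)) atTop (nhds 0) →
        Tendsto
          (fun N : ℕ =>
            ∑ k ∈ Finset.range N, (x k ⬝ᵥ Q.mulVec (x k) + u k ⬝ᵥ R.mulVec (u k)))
          atTop (nhds (x 0 ⬝ᵥ P.mulVec (x 0)))) := by
  have hdet : IsUnit S.det := (Matrix.isUnit_iff_isUnit_det S).mp hSinv
  have hSt : Sᵀ = S := by
    rw [hS]; simp [Matrix.transpose_add, Matrix.transpose_mul, hR, hP, Matrix.mul_assoc]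
  have hSi : (S⁻¹)ᵀ = S⁻¹ := by rw [Matrix.transpose_nonsing_inv, hSt]
  have hKt : (S⁻¹ * (Hᵀ * P * G))ᵀ = Gᵀ * P * H * S⁻¹ := by
    simp [Matrix.transpose_mul, hSi, hP, Matrix.mul_assoc]
  have h2 : S * (S⁻¹ * (Hᵀ * P * G)) = Hᵀ * P * G := by
    rw [← Matrix.mul_assoc, Matrix.mul_nonsing_inv S hdet, Matrix.one_mul]
  have e1 : Gᵀ * P * H * S⁻¹ * R * (S⁻¹ * (Hᵀ * P * G))
      + Gᵀ * P * H * S⁻¹ * (Hᵀ * P * H) * (S⁻¹ * (Hᵀ * P * G))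
      = Gᵀ * P * H * S⁻¹ * (Hᵀ * P * G) := by
    calc Gᵀ * P * H * S⁻¹ * R * (S⁻¹ * (Hᵀ * P * G))
          + Gᵀ * P * H * S⁻¹ * (Hᵀ * P * H) * (S⁻¹ * (Hᵀ * P * G))
        = Gᵀ * P * H * S⁻¹ * ((R + Hᵀ * P * H) * (S⁻¹ * (Hᵀ * P * G))) := by
            rw [Matrix.add_mul, Matrix.mul_add]; simp only [Matrix.mul_assoc]
      _ = Gᵀ * P * H * S⁻¹ * (Hᵀ * P * G) := by rw [← hS, h2]
  have key : Q + Kᵀ * R * K + (G - H * K)ᵀ * P * (G - H * K) = P := by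
    rw [hK, Matrix.transpose_sub,
      show (H * (S⁻¹ * (Hᵀ * P * G)))ᵀ = (S⁻¹ * (Hᵀ * P * G))ᵀ * Hᵀ from Matrix.transpose_mul _ _,
      hKt]
    calc Q + Gᵀ * P * H * S⁻¹ * R * (S⁻¹ * (Hᵀ * P * G))
          + (Gᵀ - (Gᵀ * P * H * S⁻¹) * Hᵀ) * P * (G - H * (S⁻¹ * (Hᵀ * P * G)))
        = Q + Gᵀ * P * G - Gᵀ * P * H * S⁻¹ * (Hᵀ * P * G)
            - Gᵀ * P * H * S⁻¹ * (Hᵀ * P * G)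
            + (Gᵀ * P * H * S⁻¹ * R * (S⁻¹ * (Hᵀ * P * G))
              + Gᵀ * P * H * S⁻¹ * (Hᵀ * P * H) * (S⁻¹ * (Hᵀ * P * G))) := by
            simp only [Matrix.sub_mul, Matrix.mul_sub, Matrix.mul_assoc]; abel
      _ = Q + Gᵀ * P * G - Gᵀ * P * H * S⁻¹ * (Hᵀ * P * G)
            - Gᵀ * P * H * S⁻¹ * (Hᵀ * P * G)
            + Gᵀ * P * H * S⁻¹ * (Hᵀ * P * G) := by rw [e1]
      _ = Q + Gᵀ * P * G - Gᵀ * P * H * S⁻¹ * (Hᵀ * P * G) := by noncomm_ring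
      _ = P := hRiccati.symm
  have step : ∀ k : ℕ,
      x k ⬝ᵥ Q.mulVec (x k) + u k ⬝ᵥ R.mulVec (u k)
        = x k ⬝ᵥ P.mulVec (x k) - x (k + 1) ⬝ᵥ P.mulVec (x (k + 1)) := by
    intro k
    rw [hu, hdyn]
    have hneg : (-(K.mulVec (x k))) ⬝ᵥ R.mulVec (-(K.mulVec (x k)))
        = (K.mulVec (x k)) ⬝ᵥ R.mulVec (K.mulVec (x k)) := by
      rw [Matrix.mulVec_neg, dotProduct_neg, neg_dotProduct, neg_neg]
    rw [hneg, quad_mulVec, quad_mulVec]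
    have := congrArg (fun M : Matrix (Fin n) (Fin n) ℝ => x k ⬝ᵥ M.mulVec (x k)) key
    simp only [Matrix.add_mulVec, dotProduct_add] at this
    linarith
  have part1 : ∀ N : ℕ,
      ∑ k ∈ Finset.range N, (x k ⬝ᵥ Q.mulVec (x k) + u k ⬝ᵥ R.mulVec (u k)) =
        x 0 ⬝ᵥ P.mulVec (x 0) - x N ⬝ᵥ P.mulVec (x N) := by
    intro N
    calc ∑ k ∈ Finset.range N, (x k ⬝ᵥ Q.mulVec (x k) + u k ⬝ᵥ R.mulVec (u k))
        = ∑ k ∈ Finset.range N,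
            (x k ⬝ᵥ P.mulVec (x k) - x (k + 1) ⬝ᵥ P.mulVec (x (k + 1))) :=
          Finset.sum_congr rfl fun k _ => step k
      _ = x 0 ⬝ᵥ P.mulVec (x 0) - x N ⬝ᵥ P.mulVec (x N) :=
          Finset.sum_range_sub' (fun k => x k ⬝ᵥ P.mulVec (x k)) N
  refine ⟨part1, fun h => ?_⟩
  have := (tendsto_const_nhds (x := (x 0 ⬝ᵥ P.mulVec (x 0))) (f := atTop (α := ℕ))).sub h
  rw [sub_zero] at this
  exact this.congr fun N => (part1 N).symm
end

section
/- Let Φ₁, Φ₂ be real n×n matrices, P a real symmetric positive definite n×n matrix, and a₁, a₂, a, r real numbers with a₁ ≥ 1, 0 < a₂ ≤ 1, 0 ≤ r ≤ 1, a > 1, a₁^r · a₂^{1−r} ≥ a (real powers), and suppose a_i⁻²·P − ΦᵢᵀPΦᵢ is positive semidefinite for i = 1, 2. Let s : ℕ → {1, 2} be a switching signal such that for every k ∈ ℕ the count n₁(k) = #{j < k : s(j) = 1} satisfies n₁(k) ≥ r·k, and let x : ℕ → ℝⁿ satisfy x(k+1) = Φ_{s(k)}x(k). Then x(k)ᵀPx(k)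 ≤ a^{−2k} · x(0)ᵀPx(0) for every k ∈ ℕ. -/
open Matrix

/-- Lyapunov decay for the two-mode switched system modeling an NCS with
packet loss: mode `0` (successful transmission, rate `a 0 = a₁ ≥ 1`) occurs at
least a fraction `r` of the time, mode `1` (packet loss, rate `0 < a 1 = a₂ ≤ 1`),
the BMI conditions `aᵢ⁻² • P - Φᵢᵀ P Φᵢ ⪰ 0` hold and `a₁^r a₂^(1-r) ≥ a > 1`.
Then the quadratic Lyapunov value decays as `a ^ (-2 k)`. -/
theorem ncs_switched_lyapunov_decay
    {n : ℕ} (Φ : Fin 2 → Matrix (Fin n) (Fin n) ℝ)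
    (P : Matrix (Fin n) (Fin n) ℝ) (a : Fin 2 → ℝ) (A r : ℝ)
    (hP : P.PosDef)
    (ha₁ : 1 ≤ a 0) (ha₂pos : 0 < a 1) (ha₂ : a 1 ≤ 1)
    (hr0 : 0 ≤ r) (hr1 : r ≤ 1) (hA : 1 < A)
    (hrate : A ≤ (a 0) ^ r * (a 1) ^ (1 - r))
    (hpsd : ∀ i : Fin 2, (((a i) ^ 2)⁻¹ • P - (Φ i)ᵀ * P * (Φ i)).PosSemidef)
    (s : ℕ → Fin 2)
    (hcount : ∀ k : ℕ,
      r * k ≤ (((Finset.range k).filter fun j => s j = 0).card : ℝ))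
    (x : ℕ → (Fin n → ℝ))
    (hdyn : ∀ k : ℕ, x (k + 1) = (Φ (s k)).mulVec (x k)) :
    ∀ k : ℕ, x k ⬝ᵥ P.mulVec (x k) ≤ (A ^ (2 * k))⁻¹ * (x 0 ⬝ᵥ P.mulVec (x 0)) := by
  have hapos : ∀ i : Fin 2, 0 < a i := by
    intro i; fin_cases i
    · exact lt_of_lt_of_le zero_lt_one ha₁
    · exact ha₂pos
  -- step inequality
  have hstep : ∀ k : ℕ, x (k+1) ⬝ᵥ P.mulVec (x (k+1)) ≤
      ((a (s k))^2)⁻¹ * (x k ⬝ᵥ P.mulVec (x k)) := by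
    intro k
    have h := (hpsd (s k)).dotProduct_mulVec_nonneg (x k)
    simp only [sub_mulVec, dotProduct_sub, smul_mulVec, dotProduct_smul,
      star_trivial, smul_eq_mul, sub_nonneg] at h
    have e : x k ⬝ᵥ ((Φ (s k))ᵀ * P * (Φ (s k))).mulVec (x k)
        = x (k+1) ⬝ᵥ P.mulVec (x (k+1)) := by
      rw [hdyn k]
      rw [← Matrix.mulVec_mulVec, ← Matrix.mulVec_mulVec,
        Matrix.dotProduct_mulVec, Matrix.vecMul_transpose]
    rw [e] at h
    exact h
  -- V nonneg
  have hVnn : ∀ k, 0 ≤ x k ⬝ᵥ P.mulVec (x k) := by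
    intro k
    have := hP.posSemidef.dotProduct_mulVec_nonneg (x k)
    simpa using this
  -- product bound
  have hprod : ∀ k : ℕ, x k ⬝ᵥ P.mulVec (x k) ≤
      ((∏ j ∈ Finset.range k, (a (s j))^2)⁻¹) * (x 0 ⬝ᵥ P.mulVec (x 0)) := by
    intro k
    induction k with
    | zero => simp
    | succ k ih =>
      have hc : 0 < (a (s k))^2 := pow_pos (hapos _) 2
      have hpp : 0 < ∏ j ∈ Finset.range k, (a (s j))^2 :=
        Finset.prod_pos fun j _ => pow_pos (hapos _) 2
      calc x (k+1) ⬝ᵥ P.mulVec (x (k+1)) ≤ ((a (s k))^2)⁻¹ * (x k ⬝ᵥ P.mulVec (x k)) :=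
            hstep k
        _ ≤ ((a (s k))^2)⁻¹ * (((∏ j ∈ Finset.range k, (a (s j))^2)⁻¹) * (x 0 ⬝ᵥ P.mulVec (x 0))) := by
            apply mul_le_mul_of_nonneg_left ih (by positivity)
        _ = ((∏ j ∈ Finset.range (k+1), (a (s j))^2)⁻¹) * (x 0 ⬝ᵥ P.mulVec (x 0)) := by
            rw [Finset.prod_range_succ, mul_inv]
            ring
  intro k
  refine (hprod k).trans ?_
  have hpp : 0 < ∏ j ∈ Finset.range k, (a (s j))^2 :=
    Finset.prod_pos fun j _ => pow_pos (hapos _) 2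
  have hAk : (0:ℝ) < A ^ (2*k) := pow_pos (by linarith) _
  apply mul_le_mul_of_nonneg_right _ (hVnn 0)
  rw [inv_le_inv₀ hpp hAk]
  -- now: A^(2k) ≤ ∏ (a (s j))^2
  set n₁ := ((Finset.range k).filter fun j => s j = 0).card with hn₁
  have hn₁le : n₁ ≤ k := by
    simpa [hn₁] using Finset.card_filter_le (Finset.range k) fun j => s j = 0
  have hprodeq : ∏ j ∈ Finset.range k, (a (s j))^2 = (a 0)^(2*n₁) * (a 1)^(2*(k-n₁)) := by
    rw [← Finset.prod_filter_mul_prod_filter_not (Finset.range k) (fun j => s j = 0)]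
    have h1 : ∀ j ∈ (Finset.range k).filter (fun j => s j = 0), (a (s j))^2 = (a 0)^2 := by
      intro j hj; simp at hj; rw [hj.2]
    have h2 : ∀ j ∈ (Finset.range k).filter (fun j => ¬ s j = 0), (a (s j))^2 = (a 1)^2 := by
      intro j hj; simp at hj
      have : s j = 1 := by omega
      rw [this]
    rw [Finset.prod_congr rfl h1, Finset.prod_congr rfl h2,
      Finset.prod_const, Finset.prod_const]
    have hcard2 : ((Finset.range k).filter fun j => ¬ s j = 0).card = k - n₁ := by
      have := Finset.card_filter_add_card_filter_not
        (s := Finset.range k) (p := fun j => s j = 0)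
      simp only [Finset.card_range] at this
      omega
    rw [hcard2, ← pow_mul, ← pow_mul]
  rw [hprodeq]
  -- A^k ≤ a0^n₁ * a1^(k-n₁), then square
  have hkey : A ^ k ≤ (a 0)^n₁ * (a 1)^(k - n₁) := by
    have h0 : A ^ k ≤ ((a 0)^r * (a 1)^(1-r))^(k:ℝ) := by
      rw [← Real.rpow_natCast A k]
      exact Real.rpow_le_rpow (by linarith) hrate (Nat.cast_nonneg k)
    have hsplit : ((a 0)^r * (a 1)^(1-r))^(k:ℝ)
        = (a 0)^(r*k) * (a 1)^((1-r)*k) := by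
      rw [Real.mul_rpow (Real.rpow_nonneg (hapos 0).le _) (Real.rpow_nonneg (hapos 1).le _),
        ← Real.rpow_mul (hapos 0).le, ← Real.rpow_mul (hapos 1).le]
    have h1 : (a 0)^(r*k) ≤ (a 0)^(n₁:ℝ) :=
      Real.rpow_le_rpow_of_exponent_le ha₁ (hcount k)
    have h2 : (a 1)^((1-r)*k) ≤ (a 1)^((k - n₁ : ℕ):ℝ) := by
      apply Real.rpow_le_rpow_of_exponent_ge ha₂pos ha₂
      have hc := hcount k
      have : ((k - n₁ : ℕ):ℝ) = (k:ℝ) - n₁ := by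
        rw [Nat.cast_sub hn₁le]
      rw [this]
      nlinarith [hcount k]
    calc A ^ k ≤ ((a 0)^r * (a 1)^(1-r))^(k:ℝ) := h0
      _ = (a 0)^(r*k) * (a 1)^((1-r)*k) := hsplit
      _ ≤ (a 0)^(n₁:ℝ) * (a 1)^((k-n₁:ℕ):ℝ) := by
          apply mul_le_mul h1 h2 (Real.rpow_nonneg (hapos 1).le _)
            (Real.rpow_nonneg (hapos 0).le _)
      _ = (a 0)^n₁ * (a 1)^(k-n₁) := by
          rw [Real.rpow_natCast, Real.rpow_natCast]
  have hAknn : (0:ℝ) ≤ A ^ k := pow_nonneg (by linarith) _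
  calc A ^ (2*k) = (A^k)^2 := by rw [← pow_mul]; ring_nf
    _ ≤ ((a 0)^n₁ * (a 1)^(k-n₁))^2 := by
        apply pow_le_pow_left₀ hAknn hkey
    _ = (a 0)^(2*n₁) * (a 1)^(2*(k-n₁)) := by
        rw [mul_pow, ← pow_mul, ← pow_mul]; ring_nf
end

section
/- Let Φ₁, Φ₂ be real n×n matrices, P a real symmetric positive definite n×n matrix, and a₁, a₂, a, r real numbers with a₁ ≥ 1, 0 < a₂ ≤ 1, 0 ≤ r ≤ 1, a > 1, a₁^r · a₂^{1−r} ≥ a (real powers), and suppose a_i⁻²·P − ΦᵢᵀPΦᵢ is positive semidefinite for i = 1, 2. Then there exists a constant C > 0, depending only on P, such that for every switching signal s : ℕ → {1, 2} with #{j < k : s(j) = 1} ≥ r·k for all k, and every trajectory x : ℕ → ℝⁿ with x(k+1) = Φ_{s(k)}x(k), one has ‖x(k)‖ ≤ C · a^{−k} · ‖x(0)‖ for all k ∈ ℕ. In particular the switched system is exponentially stable with decay rate at least a. -/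
open Matrix

private lemma norm_symm_sq_aux {n : ℕ} (v : Fin n → ℝ) :
    ‖(WithLp.equiv 2 (Fin n → ℝ)).symm v‖ ^ 2 = v ⬝ᵥ v := by
  rw [EuclideanSpace.norm_eq, Real.sq_sqrt (by positivity)]
  simp [dotProduct, Real.norm_eq_abs, sq, abs_mul_abs_self]

private lemma quad_form_aux {n : ℕ} (M P : Matrix (Fin n) (Fin n) ℝ) (v : Fin n → ℝ) :
    v ⬝ᵥ (Mᵀ * P * M) *ᵥ v = (M *ᵥ v) ⬝ᵥ P *ᵥ (M *ᵥ v) := by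
  rw [← Matrix.mulVec_mulVec, ← Matrix.mulVec_mulVec, dotProduct_mulVec, vecMul_transpose]

private lemma rpow_prod_aux (a0 a1 A r : ℝ) (ha₁ : 1 ≤ a0) (ha₂pos : 0 < a1) (ha₂ : a1 ≤ 1)
    (hA0 : 0 ≤ A) (hrate : A ≤ a0 ^ r * a1 ^ (1 - r)) (k N : ℕ) (hNk : N ≤ k)
    (hrk : r * k ≤ (N : ℝ)) (hk1 : ((k - N : ℕ) : ℝ) ≤ (1 - r) * k) :
    A ^ k ≤ a0 ^ N * a1 ^ (k - N) := by
  have ha0pos : (0:ℝ) < a0 := lt_of_lt_of_le one_pos ha₁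
  calc A ^ k ≤ (a0 ^ r * a1 ^ (1 - r)) ^ k := pow_le_pow_left₀ hA0 hrate k
    _ = a0 ^ (r * k) * a1 ^ ((1 - r) * k) := by
        rw [mul_pow, ← Real.rpow_natCast (a0 ^ r), ← Real.rpow_natCast (a1 ^ (1 - r)),
          ← Real.rpow_mul ha0pos.le, ← Real.rpow_mul ha₂pos.le]
    _ ≤ a0 ^ ((N : ℕ) : ℝ) * a1 ^ (((k - N : ℕ)) : ℝ) := by
        apply mul_le_mul
        · exact Real.rpow_le_rpow_of_exponent_le ha₁ hrk
        · exact Real.rpow_le_rpow_of_exponent_ge ha₂pos ha₂ hk1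
        · exact Real.rpow_nonneg ha₂pos.le _
        · exact Real.rpow_nonneg ha0pos.le _
    _ = a0 ^ N * a1 ^ (k - N) := by rw [Real.rpow_natCast, Real.rpow_natCast]

open scoped MatrixOrder in
private lemma sqrt_aux {n : ℕ} (P : Matrix (Fin n) (Fin n) ℝ) (hP : P.PosSemidef) :
    ∃ S : Matrix (Fin n) (Fin n) ℝ, S.PosSemidef ∧ S * S = P :=
  ⟨CFC.sqrt P, (CFC.sqrt_nonneg P).posSemidef, CFC.sqrt_mul_sqrt_self P hP.nonneg⟩

/-- Exponential stability of the two-mode switched system modeling an NCS with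
packet loss: under the BMI conditions `aᵢ⁻² • P - Φᵢᵀ P Φᵢ ⪰ 0` with
`a₁ = a 0 ≥ 1`, `0 < a₂ = a 1 ≤ 1` and `a₁^r a₂^(1-r) ≥ A > 1`, there is a
constant `C > 0` (depending only on `P`) such that every trajectory with the
transmission mode occurring at least a fraction `r` of the time satisfies
`‖x k‖ ≤ C A⁻ᵏ ‖x 0‖` in the Euclidean norm. -/
theorem ncs_switched_exponential_stability
    {n : ℕ} (Φ : Fin 2 → Matrix (Fin n) (Fin n) ℝ)
    (P : Matrix (Fin n) (Fin n) ℝ) (a : Fin 2 → ℝ) (A r : ℝ)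
    (hP : P.PosDef)
    (ha₁ : 1 ≤ a 0) (ha₂pos : 0 < a 1) (ha₂ : a 1 ≤ 1)
    (hr0 : 0 ≤ r) (hr1 : r ≤ 1) (hA : 1 < A)
    (hrate : A ≤ (a 0) ^ r * (a 1) ^ (1 - r))
    (hpsd : ∀ i : Fin 2, (((a i) ^ 2)⁻¹ • P - (Φ i)ᵀ * P * (Φ i)).PosSemidef) :
    ∃ C : ℝ, 0 < C ∧
      ∀ (s : ℕ → Fin 2),
        (∀ k : ℕ,
          r * k ≤ (((Finset.range k).filter fun j => s j = 0).card : ℝ)) →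
        ∀ x : ℕ → EuclideanSpace ℝ (Fin n),
          (∀ k : ℕ, x (k + 1) = (Φ (s k)).mulVec (x k)) →
          ∀ k : ℕ, ‖x k‖ ≤ C * (A ^ k)⁻¹ * ‖x 0‖ := by
  classical
  have hapos : ∀ i : Fin 2, 0 < a i := by
    intro i; fin_cases i
    · exact lt_of_lt_of_le one_pos ha₁
    · exact ha₂pos
  -- the square root of `P`
  obtain ⟨S, hSps, hSS⟩ := sqrt_aux P hP.posSemidef
  have hSsymm : Sᵀ = S := by
    rw [← conjTranspose_eq_transpose_of_trivial]; exact hSps.isHermitian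
  have hdet : IsUnit S.det := by
    have hPdet : P.det ≠ 0 := ne_of_gt hP.det_pos
    rw [← hSS, det_mul] at hPdet
    exact isUnit_iff_ne_zero.mpr (left_ne_zero_of_mul hPdet)
  have hinv : S⁻¹ * S = 1 := nonsing_inv_mul S hdet
  set e := WithLp.equiv 2 (Fin n → ℝ) with he
  set TS := toEuclideanCLM (𝕜 := ℝ) S with hTS
  set TSi := toEuclideanCLM (𝕜 := ℝ) S⁻¹ with hTSi
  -- the Lyapunov function as a norm
  have hW2 : ∀ y : EuclideanSpace ℝ (Fin n),
      ‖TS y‖ ^ 2 = (e y) ⬝ᵥ P *ᵥ (e y) := by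
    intro y
    have h1 : TS y = e.symm (S *ᵥ e y) := by
      conv_lhs => rw [← Equiv.symm_apply_apply e y]
      exact toEuclideanCLM_toLp S (e y)
    rw [h1, norm_symm_sq_aux, dotProduct_mulVec, ← mulVec_transpose, mulVec_mulVec,
      hSsymm, hSS, dotProduct_comm]
  -- lower bound
  have hlow : ∀ y : EuclideanSpace ℝ (Fin n), ‖y‖ ≤ ‖TSi‖ * ‖TS y‖ := by
    intro y
    have hid : TSi (TS y) = y := by
      have h1 : TSi * TS = 1 := by
        rw [hTSi, hTS, ← _root_.map_mul, hinv, _root_.map_one]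
      calc TSi (TS y) = (TSi * TS) y := rfl
        _ = y := by rw [h1]; rfl
    conv_lhs => rw [← hid]
    exact TSi.le_opNorm _
  -- upper bound
  have hup : ∀ y : EuclideanSpace ℝ (Fin n), ‖TS y‖ ≤ ‖TS‖ * ‖y‖ := fun y => TS.le_opNorm y
  refine ⟨‖TSi‖ * ‖TS‖ + 1, by positivity, ?_⟩
  intro s hs x hx k
  -- one step decay
  have hstep : ∀ m : ℕ, ‖TS (x (m + 1))‖ ≤ (a (s m))⁻¹ * ‖TS (x m)‖ := by
    intro m
    have hxe : e (x (m + 1)) = Φ (s m) *ᵥ e (x m) := by exact hx m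
    have h0 := (posSemidef_iff_dotProduct_mulVec.mp (hpsd (s m))).2 (e (x m))
    simp only [star_trivial] at h0
    rw [sub_mulVec, dotProduct_sub, smul_mulVec, dotProduct_smul, smul_eq_mul,
      quad_form_aux] at h0
    have key2 : ‖TS (x (m + 1))‖ ^ 2 ≤ ((a (s m))⁻¹ * ‖TS (x m)‖) ^ 2 := by
      rw [mul_pow, hW2, hW2, hxe, inv_pow]
      linarith
    have h1 : 0 ≤ (a (s m))⁻¹ * ‖TS (x m)‖ :=
      mul_nonneg (inv_nonneg.2 (hapos _).le) (norm_nonneg _)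
    calc ‖TS (x (m + 1))‖ = Real.sqrt (‖TS (x (m + 1))‖ ^ 2) :=
          (Real.sqrt_sq (norm_nonneg _)).symm
      _ ≤ Real.sqrt (((a (s m))⁻¹ * ‖TS (x m)‖) ^ 2) := Real.sqrt_le_sqrt key2
      _ = (a (s m))⁻¹ * ‖TS (x m)‖ := Real.sqrt_sq h1
  -- iterate
  have hiter : ∀ m : ℕ,
      ‖TS (x m)‖ ≤ (∏ j ∈ Finset.range m, a (s j))⁻¹ * ‖TS (x 0)‖ := by
    intro m
    induction m with
    | zero => simp
    | succ m ih =>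
        calc ‖TS (x (m + 1))‖ ≤ (a (s m))⁻¹ * ‖TS (x m)‖ := hstep m
          _ ≤ (a (s m))⁻¹ * ((∏ j ∈ Finset.range m, a (s j))⁻¹ * ‖TS (x 0)‖) :=
              mul_le_mul_of_nonneg_left ih (inv_nonneg.2 (hapos _).le)
          _ = (∏ j ∈ Finset.range (m + 1), a (s j))⁻¹ * ‖TS (x 0)‖ := by
              rw [Finset.prod_range_succ, mul_inv]; ring
  -- bound the product from below by `A ^ k`
  have hprodpos : (0:ℝ) < ∏ j ∈ Finset.range k, a (s j) :=
    Finset.prod_pos fun j _ => hapos _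
  have hAk : A ^ k ≤ ∏ j ∈ Finset.range k, a (s j) := by
    set N := ((Finset.range k).filter fun j => s j = 0).card with hN
    have hNk : N ≤ k := by
      simpa using Finset.card_filter_le (Finset.range k) fun j => s j = 0
    have hcards :
        N + ((Finset.range k).filter fun j => ¬ s j = 0).card = k := by
      simpa using Finset.card_filter_add_card_filter_not
        (s := Finset.range k) (p := fun j => s j = 0)
    have hprodeq : (∏ j ∈ Finset.range k, a (s j)) = a 0 ^ N * a 1 ^ (k - N) := by
      rw [← Finset.prod_filter_mul_prod_filter_not (Finset.range k) (fun j => s j = 0)]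
      congr 1
      · rw [Finset.prod_congr rfl (fun j hj => by
          rw [(Finset.mem_filter.mp hj).2] : ∀ j ∈ _, a (s j) = a 0)]
        rw [Finset.prod_const, hN]
      · have h1 : ∀ j ∈ (Finset.range k).filter fun j => ¬ s j = 0, a (s j) = a 1 := by
          intro j hj
          have h2 := (Finset.mem_filter.mp hj).2
          have : s j = 1 := by omega
          rw [this]
        rw [Finset.prod_congr rfl h1, Finset.prod_const]
        congr 1
        omega
    rw [hprodeq]
    have hrk : r * k ≤ (N : ℝ) := hs k
    have hk1 : ((k - N : ℕ) : ℝ) ≤ (1 - r) * k := by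
      rw [Nat.cast_sub hNk]
      have hkr : r * k ≤ (N : ℝ) := hrk
      nlinarith
    exact rpow_prod_aux (a 0) (a 1) A r ha₁ ha₂pos ha₂ (le_of_lt (lt_trans one_pos hA))
      hrate k N hNk hrk hk1
  have hAkpos : (0:ℝ) < A ^ k := pow_pos (lt_trans one_pos hA) k
  have hprodinv : (∏ j ∈ Finset.range k, a (s j))⁻¹ ≤ (A ^ k)⁻¹ :=
    inv_anti₀ hAkpos hAk
  -- put everything together
  have h1 : ‖x k‖ ≤ ‖TSi‖ * ‖TS (x k)‖ := hlow (x k)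
  have h2 : ‖TS (x k)‖ ≤ (∏ j ∈ Finset.range k, a (s j))⁻¹ * ‖TS (x 0)‖ := hiter k
  have h3 : ‖TS (x 0)‖ ≤ ‖TS‖ * ‖x 0‖ := hup (x 0)
  have hTSi0 : (0:ℝ) ≤ ‖TSi‖ := norm_nonneg _
  have hTS0 : (0:ℝ) ≤ ‖TS‖ := norm_nonneg _
  have hpinv0 : (0:ℝ) ≤ (∏ j ∈ Finset.range k, a (s j))⁻¹ := inv_nonneg.2 hprodpos.le
  calc ‖x k‖ ≤ ‖TSi‖ * ‖TS (x k)‖ := h1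
    _ ≤ ‖TSi‖ * ((∏ j ∈ Finset.range k, a (s j))⁻¹ * ‖TS (x 0)‖) :=
        mul_le_mul_of_nonneg_left h2 hTSi0
    _ ≤ ‖TSi‖ * ((∏ j ∈ Finset.range k, a (s j))⁻¹ * (‖TS‖ * ‖x 0‖)) := by
        apply mul_le_mul_of_nonneg_left _ hTSi0
        exact mul_le_mul_of_nonneg_left h3 hpinv0
    _ = (‖TSi‖ * ‖TS‖) * (∏ j ∈ Finset.range k, a (s j))⁻¹ * ‖x 0‖ := by ring
    _ ≤ (‖TSi‖ * ‖TS‖ + 1) * (A ^ k)⁻¹ * ‖x 0‖ := by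
        apply mul_le_mul_of_nonneg_right _ (norm_nonneg _)
        apply mul_le_mul (by linarith) hprodinv hpinv0 (by positivity)
end
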